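/- Let $\mathbb{P}(a_0, \dots, a_n)$ be a weighted projective space with coordinates $x_0, \dots, x_n$ of weights $a_i$, let $\mathsf{p} = (\alpha_0 : \cdots : \alpha_n)$ with $\alpha_i \neq 0$ for a fixed index $i$, and for $j \neq i$ set $m_j = \operatorname{lcm}(a_i, a_j)$ and $g_j = \alpha_i^{m_j/a_i} x_j^{m_j/a_j} - \alpha_j^{m_j/a_j} x_i^{m_j/a_i}$. Then each $g_j$ is a weighted-homogeneous polynomial of degree $m_j$, and the common zero locus of $\{g_j : j \neq i\}$ in $\mathbb{P}(a_0, \dots, a_n)$ intersected with the open set $\{x_i \neq 0\}$ consists of finitely many points and contains $\mathsf{p}$. (In particular, every point $(\beta_0 : \cdots : \beta_n)$ with $\beta_i \neq 0$ in the common zero locus satisfies $\beta_j^{m_j/a_j}/\beta_i^{m_j/a_i} = \alpha_j^{m_j/a_j}/\alpha_i^{m_j/a_i}$ for all $j$, and there are at most $\prod_{j \neq i} (m_j/a_j)$ such points.) -/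

import Mathlib

open MvPolynomial

private lemma wh_pow_X {σ : Type*} (w : σ → ℕ) (j : σ) (d : ℕ) :
    IsWeightedHomogeneous w ((X j : MvPolynomial σ ℂ) ^ d) (d * w j) := by
  induction d with
  | zero => simpa using isWeightedHomogeneous_C w (1 : ℂ)
  | succ d ih =>
      have := ih.mul (isWeightedHomogeneous_X (R := ℂ) w j)
      rw [← pow_succ] at this
      convert this using 1
      ring

theorem stmt_17 (n : ℕ) (a : Fin (n+1) → ℕ) (ha : ∀ j, 0 < a j)
    (i : Fin (n+1)) (α : Fin (n+1) → ℂ) (hαi : α i ≠ 0)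
    (m : Fin (n+1) → ℕ) (hm : ∀ j, m j = Nat.lcm (a i) (a j))
    (g : Fin (n+1) → MvPolynomial (Fin (n+1)) ℂ)
    (hg : ∀ j, g j = C (α i ^ (m j / a i)) * X j ^ (m j / a j)
        - C (α j ^ (m j / a j)) * X i ^ (m j / a i)) :
    (∀ j, IsWeightedHomogeneous a (g j) (m j)) ∧
    (∀ j, j ≠ i → eval α (g j) = 0) ∧
    (∀ β : Fin (n+1) → ℂ, β i ≠ 0 → (∀ j, j ≠ i → eval β (g j) = 0) →
      ∀ j, β j ^ (m j / a j) * α i ^ (m j / a i)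
        = α j ^ (m j / a j) * β i ^ (m j / a i)) ∧
    (∃ S : Finset (Fin (n+1) → ℂ),
      S.card ≤ ∏ j ∈ Finset.univ.erase i, (m j / a j) ∧
      (∀ β : Fin (n+1) → ℂ, β i ≠ 0 → (∀ j, j ≠ i → eval β (g j) = 0) →
        ∃ γ ∈ S, ∃ lam : ℂ, lam ≠ 0 ∧ ∀ k, β k = lam ^ (a k) * γ k) ∧
      (∃ γ ∈ S, ∃ lam : ℂ, lam ≠ 0 ∧ ∀ k, α k = lam ^ (a k) * γ k)) := by
  classical
  have hdvd_i : ∀ j, a i ∣ m j := fun j => (hm j) ▸ Nat.dvd_lcm_left _ _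
  have hdvd_j : ∀ j, a j ∣ m j := fun j => (hm j) ▸ Nat.dvd_lcm_right _ _
  have hdpos : ∀ j, 0 < m j / a j := fun j =>
    Nat.div_pos (Nat.le_of_dvd ((hm j) ▸ Nat.pos_of_ne_zero (by
      simp [hm j, Nat.lcm_ne_zero, (ha i).ne', (ha j).ne'])) (hdvd_j j)) (ha j)
  -- key: extract the polynomial equation for β
  have key : ∀ (β : Fin (n+1) → ℂ), (∀ j, j ≠ i → eval β (g j) = 0) →
      ∀ j, β j ^ (m j / a j) * α i ^ (m j / a i)
        = α j ^ (m j / a j) * β i ^ (m j / a i) := by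
    intro β hβ j
    by_cases hj : j = i
    · subst hj; ring
    · have := hβ j hj
      rw [hg j] at this
      simp only [map_sub, map_mul, eval_C, eval_pow, eval_X] at this
      linear_combination this
  refine ⟨?_, ?_, fun β _ hβ => key β hβ, ?_⟩
  · intro j
    rw [hg j]
    rw [← mem_weightedHomogeneousSubmodule]
    apply Submodule.sub_mem
    · rw [mem_weightedHomogeneousSubmodule]
      have := (isWeightedHomogeneous_C a (α i ^ (m j / a i))).mul (wh_pow_X a j (m j / a j))
      rwa [zero_add, Nat.div_mul_cancel (hdvd_j j)] at this
    · rw [mem_weightedHomogeneousSubmodule]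
      have := (isWeightedHomogeneous_C a (α j ^ (m j / a j))).mul (wh_pow_X a i (m j / a i))
      rwa [zero_add, Nat.div_mul_cancel (hdvd_i j)] at this
  · intro j _
    rw [hg j]
    simp only [map_sub, map_mul, eval_C, eval_pow, eval_X]
    ring
  · -- the finite set
    refine ⟨Fintype.piFinset (fun j => if j = i then {α i}
      else (Polynomial.nthRoots (m j / a j) (α j ^ (m j / a j))).toFinset), ?_, ?_, ?_⟩
    · rw [Fintype.card_piFinset]
      rw [← Finset.prod_erase_mul _ _ (Finset.mem_univ i)]
      simp only [if_pos rfl, if_true, Finset.card_singleton, mul_one]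
      apply Finset.prod_le_prod
      · intro j _; exact Nat.zero_le _
      · intro j hj
        rw [if_neg (Finset.ne_of_mem_erase hj)]
        exact le_trans (Multiset.toFinset_card_le _)
          (le_trans (Polynomial.card_nthRoots _ _) le_rfl)
    · intro β hβi hβ
      obtain ⟨lam, hlam⟩ := IsAlgClosed.exists_pow_nat_eq (k := ℂ) (β i / α i) (ha i)
      have hlamne : lam ≠ 0 := by
        intro h; rw [h, zero_pow (ha i).ne'] at hlam
        exact hβi (by field_simp at hlam; simpa using hlam.symm)
      have hlampow : ∀ k, (lam : ℂ) ^ a k ≠ 0 := fun k => pow_ne_zero _ hlamne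
      refine ⟨fun k => β k / lam ^ a k, ?_, lam, hlamne, fun k => by field_simp⟩
      rw [Fintype.mem_piFinset]
      intro j
      by_cases hj : j = i
      · subst hj
        rw [if_pos rfl, Finset.mem_singleton, hlam]
        field_simp
      · rw [if_neg hj, Multiset.mem_toFinset, Polynomial.mem_nthRoots (hdpos j)]
        have hk := key β hβ j
        have hmi : a i * (m j / a i) = m j := Nat.mul_div_cancel' (hdvd_i j)
        have hmj : a j * (m j / a j) = m j := Nat.mul_div_cancel' (hdvd_j j)
        have hlp : (lam ^ (a j)) ^ (m j / a j) = (β i / α i) ^ (m j / a i) := by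
          rw [← hlam, ← pow_mul, ← pow_mul, hmi, hmj]
        rw [div_pow, hlp, div_eq_iff (pow_ne_zero _ (div_ne_zero hβi hαi))]
        field_simp
        have h1 : α i ^ (m j / a i) * (α i)⁻¹ ^ (m j / a i) = 1 := by
          rw [← mul_pow, mul_inv_cancel₀ hαi, one_pow]
        linear_combination (α i)⁻¹ ^ (m j / a i) * hk - β j ^ (m j / a j) * h1
    · refine ⟨α, ?_, 1, one_ne_zero, fun k => by simp⟩
      rw [Fintype.mem_piFinset]
      intro j
      by_cases hj : j = i
      · subst hj; simp
      · rw [if_neg hj, Multiset.mem_toFinset, Polynomial.mem_nthRoots (hdpos j)]
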